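/- Let G be a finite simple graph with m ≥ 1 edges, let T ≥ 1, let ω > 0, and let 𝒢 be the temporal graph with lifetime T whose every snapshot equals G. Then a partition 𝒜 of 𝒢 (given by π: V × {1,…,T} → {1,…,k}) satisfies q_ω(𝒢,𝒜) = q*_ω(𝒢) if and only if π(v,t) = π(v,1) for every vertex v and every time t (so every vertex is loyal at every time) and the induced static partition 𝒜_1 satisfies q(G,𝒜_1) = q*(G). In other words, the optimal partitions of 𝒢 are exactly those obtained by repeating an optimal static partition of G at every timestep. -/

import Mathlib

open Finset
open scoped Classical

namespace TemporalModularity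

noncomputable section

variable {V : Type*} [Fintype V] {P : Type*}

/-- Twice the number of edges of `G` with both endpoints in `A`
(the sum over ordered pairs of vertices of `A` of the adjacency indicator). -/
def twoE (G : SimpleGraph V) (A : Finset V) : ℝ :=
  ∑ u ∈ A, ∑ v ∈ A, if G.Adj u v then (1 : ℝ) else 0

/-- The degree of `v` in `G`, as a real number. -/
def deg (G : SimpleGraph V) (v : V) : ℝ :=
  ∑ u : V, if G.Adj v u then (1 : ℝ) else 0

/-- The number of edges of `G` (half the sum of the degrees), as a real number. -/
def numEdges (G : SimpleGraph V) : ℝ := (∑ v : V, deg G v) / 2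

/-- The volume of `A` in `G`: the sum of the degrees of the vertices of `A`. -/
def vol (G : SimpleGraph V) (A : Finset V) : ℝ := ∑ v ∈ A, deg G v

/-- The part with label `p` of the vertex partition induced by the labelling `π`. -/
def part (π : V → P) (p : P) : Finset V := univ.filter fun v => π v = p

/-- `Σ_{A ∈ 𝒜} (2 e_G(A) − vol_G(A)² / (2m))`, where `𝒜` is the partition of the
vertices induced by the labelling `π` (empty parts contribute zero). -/
def snapTerm (G : SimpleGraph V) (π : V → P) : ℝ :=
  ∑ p ∈ univ.image π,
    (twoE G (part π p) - vol G (part π p) ^ 2 / (2 * numEdges G))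

/-- The static modularity `q(G,𝒜) = Σ_{A ∈ 𝒜} (e(A)/m − vol(A)²/(4m²))` of the
partition induced by the labelling `π`. -/
def staticQ (G : SimpleGraph V) (π : V → P) : ℝ :=
  ∑ p ∈ univ.image π,
    (twoE G (part π p) / (2 * numEdges G) -
      vol G (part π p) ^ 2 / (4 * numEdges G ^ 2))

/-- The maximum static modularity `q*(G)` over all vertex partitions (every partition
of `V` is induced by some labelling `V → V`). -/
def staticQStar (G : SimpleGraph V) : ℝ := ⨆ π : V → V, staticQ G π

/-- The loyalty contribution `L(𝒜)` of the temporal partition `π` with lifetime `T`. -/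
def loyalty (T : ℕ) (π : V → ℕ → P) : ℝ :=
  ∑ v : V, ∑ t ∈ Icc 1 (T - 1), if π v t = π v (t + 1) then (1 : ℝ) else 0

/-- The per-time loyalty `L(𝒜,t)` of the temporal partition `π`. -/
def loyaltyAt (π : V → ℕ → P) (t : ℕ) : ℝ :=
  ∑ v : V, if π v t = π v (t + 1) then (1 : ℝ) else 0

/-- The normalisation factor `μ_ω(𝒢) = ω n (T−1)/2 + Σ_t m_t`. -/
def mu (G : ℕ → SimpleGraph V) (T : ℕ) (ω : ℝ) : ℝ :=
  ω * (Fintype.card V) * ((T : ℝ) - 1) / 2 + ∑ t ∈ Icc 1 T, numEdges (G t)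

/-- The non-normalised temporal modularity of the restriction of the temporal graph
`G` to the time interval `[a,b]`, for the partition `π`. -/
def qTildeI (G : ℕ → SimpleGraph V) (a b : ℕ) (ω : ℝ) (π : V → ℕ → P) : ℝ :=
  (∑ t ∈ Icc a b, snapTerm (G t) fun v => π v t) +
    ω * ∑ v : V, ∑ t ∈ Icc a (b - 1), if π v t = π v (t + 1) then (1 : ℝ) else 0

/-- The non-normalised temporal modularity `q̃_ω(𝒢,𝒜)` of the partition `π` of the
temporal graph `G` with lifetime `T`. -/
def qTilde (G : ℕ → SimpleGraph V) (T : ℕ) (ω : ℝ) (π : V → ℕ → P) : ℝ :=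
  qTildeI G 1 T ω π

/-- The temporal modularity `q_ω(𝒢,𝒜)` of the partition `π` of the temporal graph `G`
with lifetime `T`. -/
def qTemp (G : ℕ → SimpleGraph V) (T : ℕ) (ω : ℝ) (π : V → ℕ → P) : ℝ :=
  qTilde G T ω π / (2 * mu G T ω)

/-- The temporal modularity `q*_ω(𝒢)`: the maximum of `q_ω(𝒢,𝒜)` over all partitions
(every partition of `V × [T]` is induced by some labelling into `ℕ`). -/
def qTempStar (G : ℕ → SimpleGraph V) (T : ℕ) (ω : ℝ) : ℝ :=
  ⨆ π : V → ℕ → ℕ, qTemp G T ω π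

/-- The temporal `k`-modularity `q*_{k,ω}(𝒢)`: the maximum of `q_ω(𝒢,𝒜)` over all
partitions into at most `k` parts. -/
def qTempStarK (G : ℕ → SimpleGraph V) (T : ℕ) (ω : ℝ) (k : ℕ) : ℝ :=
  ⨆ π : V → ℕ → Fin k, qTemp G T ω π

/-- The maximum non-normalised temporal modularity of the restriction of `G` to the
time interval `[a,b]`, over all partitions. -/
def qTildeStarI (G : ℕ → SimpleGraph V) (a b : ℕ) (ω : ℝ) : ℝ :=
  ⨆ π : V → ℕ → ℕ, qTildeI G a b ω π

/-- The non-normalised temporal modularity `q̃*_ω(𝒢)` of the temporal graph `G` with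
lifetime `T`. -/
def qTildeStar (G : ℕ → SimpleGraph V) (T : ℕ) (ω : ℝ) : ℝ := qTildeStarI G 1 T ω

/-- The maximum non-normalised temporal modularity of the restriction of `G` to `[a,b]`
over partitions into at most `c` parts. -/
def qTildeStarKI (G : ℕ → SimpleGraph V) (a b : ℕ) (ω : ℝ) (c : ℕ) : ℝ :=
  ⨆ π : V → ℕ → Fin c, qTildeI G a b ω π

/-- The non-normalised temporal `c`-modularity `q̃*_{c,ω}(𝒢)`. -/
def qTildeStarK (G : ℕ → SimpleGraph V) (T : ℕ) (ω : ℝ) (c : ℕ) : ℝ :=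
  qTildeStarKI G 1 T ω c

end

section Aux

variable {V : Type*} [Fintype V] {P : Type*} {Q' : Type*}

lemma deg_nonneg (G : SimpleGraph V) (v : V) : 0 ≤ deg G v := by
  unfold deg
  exact Finset.sum_nonneg fun w _ => by split_ifs <;> norm_num

lemma numEdges_pos (G : SimpleGraph V) (hG : G.edgeSet.Nonempty) : 0 < numEdges G := by
  obtain ⟨e, he⟩ := hG
  induction e with
  | h u v =>
    rw [SimpleGraph.mem_edgeSet] at he
    have h1 : (1 : ℝ) ≤ deg G u := by
      unfold deg
      have := Finset.single_le_sum (f := fun w => if G.Adj u w then (1 : ℝ) else 0)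
        (fun w _ => by split_ifs <;> norm_num) (Finset.mem_univ v)
      simpa [he] using this
    have h2 : (1 : ℝ) ≤ ∑ w : V, deg G w :=
      le_trans h1 (Finset.single_le_sum (fun w _ => deg_nonneg G w) (mem_univ u))
    unfold numEdges; linarith

lemma sum_parts_comp (σ : V → Q') (g : Q' → P)
    (hg : ∀ v w : V, g (σ v) = g (σ w) → σ v = σ w) (f : Finset V → ℝ) :
    ∑ p ∈ univ.image fun v => g (σ v), f (part (fun v => g (σ v)) p)
      = ∑ q ∈ univ.image σ, f (part σ q) := by
  have himg : (univ.image fun v => g (σ v)) = (univ.image σ).image g := by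
    rw [Finset.image_image]; rfl
  rw [himg, Finset.sum_image]
  · refine Finset.sum_congr rfl fun q hq => ?_
    obtain ⟨w, -, rfl⟩ := Finset.mem_image.mp hq
    congr 1
    ext v
    simp only [part, mem_filter, mem_univ, true_and]
    exact ⟨fun h => hg v w h, fun h => by rw [h]⟩
  · intro q1 h1 q2 h2 hgq
    obtain ⟨w1, -, rfl⟩ := Finset.mem_image.mp h1
    obtain ⟨w2, -, rfl⟩ := Finset.mem_image.mp h2
    exact hg w1 w2 hgq

lemma staticQ_comp (G : SimpleGraph V) (σ : V → Q') (g : Q' → P)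
    (hg : ∀ v w : V, g (σ v) = g (σ w) → σ v = σ w) :
    staticQ G (fun v => g (σ v)) = staticQ G σ := by
  unfold staticQ
  exact sum_parts_comp σ g hg
    (fun A => twoE G A / (2 * numEdges G) - vol G A ^ 2 / (4 * numEdges G ^ 2))

lemma staticQ_le_star [Nonempty V] (G : SimpleGraph V) (π : V → P) :
    staticQ G π ≤ staticQStar G := by
  set σ : V → V := fun v => Function.invFun π (π v) with hσ
  have hπσ : ∀ v, π (σ v) = π v := fun v => Function.invFun_eq ⟨v, rfl⟩
  have h1 : staticQ G π = staticQ G σ := by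
    have hg : ∀ v w : V, π (σ v) = π (σ w) → σ v = σ w := by
      intro v w h
      rw [hπσ, hπσ] at h
      simp [hσ, h]
    have h2 := staticQ_comp G σ π hg
    rwa [show (fun v => π (σ v)) = π from funext hπσ] at h2
  rw [h1]
  exact le_ciSup (Set.Finite.bddAbove (Set.finite_range _)) σ

lemma snapTerm_eq_mul (G : SimpleGraph V) (hm : numEdges G ≠ 0) (π : V → P) :
    snapTerm G π = 2 * numEdges G * staticQ G π := by
  unfold snapTerm staticQ
  rw [Finset.mul_sum]
  refine Finset.sum_congr rfl fun p _ => ?_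
  field_simp
  ring

end Aux


/-- If every snapshot of `𝒢` equals the static graph `G` (which has at
least one edge), `T ≥ 1` and `ω > 0`, then a partition `π` of `𝒢` is optimal if and
only if `π(v,t) = π(v,1)` for every vertex `v` and every time `t ∈ [T]` (every vertex
is loyal at every time) and the induced static partition at time `1` is an optimal
static partition of `G`. -/
theorem temporalModularity_constant_snapshots_optimal_iff {V : Type*} [Fintype V]
    (G : SimpleGraph V) (hG : G.edgeSet.Nonempty)
    (T : ℕ) (hT : 1 ≤ T) (ω : ℝ) (hω : 0 < ω) (π : V → ℕ → ℕ) :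
    qTemp (fun _ => G) T ω π = qTempStar (fun _ => G) T ω ↔
      ((∀ v : V, ∀ t ∈ Icc 1 T, π v t = π v 1) ∧
        staticQ G (fun v => π v 1) = staticQStar G) := by
  classical
  have hV : Nonempty V := by
    obtain ⟨e, he⟩ := hG
    induction e with
    | h u v => exact ⟨u⟩
  have hm : 0 < numEdges G := numEdges_pos G hG
  set m : ℝ := numEdges G with hmdef
  set Q : ℝ := staticQStar G with hQdef
  set n : ℝ := (Fintype.card V : ℝ) with hndef
  have hn : 0 ≤ n := by positivity
  have hT1 : (1 : ℝ) ≤ (T : ℝ) := by exact_mod_cast hT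
  set S : ℝ := (T : ℝ) * (2 * m * Q) + ω * (n * ((T : ℝ) - 1)) with hSdef
  -- the normalisation factor is positive
  have hmu : mu (fun _ => G) T ω = ω * n * ((T : ℝ) - 1) / 2 + (T : ℝ) * m := by
    unfold mu
    rw [Finset.sum_const, Nat.card_Icc, nsmul_eq_mul]
    simp only [Nat.add_sub_cancel, hmdef, hndef]
  have hμpos : 0 < 2 * mu (fun _ => G) T ω := by
    rw [hmu]
    have h1 : 0 ≤ ω * n * ((T : ℝ) - 1) / 2 := by
      apply div_nonneg _ (by norm_num)
      apply mul_nonneg (mul_nonneg hω.le hn)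
      linarith
    have h2 : 0 < (T : ℝ) * m := mul_pos (by linarith) hm
    linarith
  -- per-snapshot bound
  have hsnap_le : ∀ σ : V → ℕ, snapTerm G σ ≤ 2 * m * Q := by
    intro σ
    rw [snapTerm_eq_mul G hm.ne' σ]
    exact mul_le_mul_of_nonneg_left (staticQ_le_star G σ) (by positivity)
  -- per-vertex loyalty bound
  have hcardIcc : ((Icc 1 (T - 1)).card : ℝ) = (T : ℝ) - 1 := by
    rw [Nat.card_Icc]
    have : T - 1 + 1 - 1 = T - 1 := by omega
    rw [this, Nat.cast_sub hT]
    norm_num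
  have hinner_le : ∀ (π' : V → ℕ → ℕ) (v : V),
      (∑ t ∈ Icc 1 (T - 1), if π' v t = π' v (t + 1) then (1 : ℝ) else 0)
        ≤ (T : ℝ) - 1 := by
    intro π' v
    calc (∑ t ∈ Icc 1 (T - 1), if π' v t = π' v (t + 1) then (1 : ℝ) else 0)
        ≤ ∑ _t ∈ Icc 1 (T - 1), (1 : ℝ) :=
          Finset.sum_le_sum fun t _ => by split_ifs <;> norm_num
      _ = (T : ℝ) - 1 := by rw [Finset.sum_const, nsmul_eq_mul, mul_one, hcardIcc]
  -- loyalty characterisation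
  have hloyal_iff : ∀ π' : V → ℕ → ℕ,
      (∀ v, ∀ t ∈ Icc 1 (T - 1), π' v t = π' v (t + 1)) ↔
        (∀ v : V, ∀ t ∈ Icc 1 T, π' v t = π' v 1) := by
    intro π'
    constructor
    · intro h v t ht
      rw [mem_Icc] at ht
      obtain ⟨h1, h2⟩ := ht
      induction t, h1 using Nat.le_induction with
      | base => rfl
      | succ t h1t ih =>
        have ht' : t ∈ Icc 1 (T - 1) := mem_Icc.mpr ⟨h1t, by omega⟩
        rw [← h v t ht', ih (by omega)]
    · intro h v t ht
      rw [mem_Icc] at ht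
      rw [h v t (mem_Icc.mpr ⟨ht.1, by omega⟩),
        h v (t + 1) (mem_Icc.mpr ⟨by omega, by omega⟩)]
  -- decomposition of qTilde
  have hqTilde : ∀ π' : V → ℕ → ℕ, qTilde (fun _ => G) T ω π' =
      (∑ t ∈ Icc 1 T, snapTerm G fun v => π' v t) +
        ω * ∑ v : V, ∑ t ∈ Icc 1 (T - 1),
          if π' v t = π' v (t + 1) then (1 : ℝ) else 0 := by
    intro π'
    unfold qTilde qTildeI
    congr
    funext v
    exact Finset.sum_congr rfl fun t _ => by congr
  have hA_le : ∀ π' : V → ℕ → ℕ,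
      (∑ t ∈ Icc 1 T, snapTerm G fun v => π' v t) ≤ (T : ℝ) * (2 * m * Q) := by
    intro π'
    calc (∑ t ∈ Icc 1 T, snapTerm G fun v => π' v t)
        ≤ ∑ _t ∈ Icc 1 T, 2 * m * Q :=
          Finset.sum_le_sum fun t _ => hsnap_le _
      _ = (T : ℝ) * (2 * m * Q) := by
          rw [Finset.sum_const, Nat.card_Icc, nsmul_eq_mul]
          simp only [Nat.add_sub_cancel]
  have hL_le : ∀ π' : V → ℕ → ℕ,
      (∑ v : V, ∑ t ∈ Icc 1 (T - 1),
        if π' v t = π' v (t + 1) then (1 : ℝ) else 0) ≤ n * ((T : ℝ) - 1) := by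
    intro π'
    calc (∑ v : V, ∑ t ∈ Icc 1 (T - 1),
          if π' v t = π' v (t + 1) then (1 : ℝ) else 0)
        ≤ ∑ _v : V, ((T : ℝ) - 1) := Finset.sum_le_sum fun v _ => hinner_le π' v
      _ = n * ((T : ℝ) - 1) := by
          rw [Finset.sum_const, nsmul_eq_mul, Finset.card_univ]
  have hqle : ∀ π' : V → ℕ → ℕ, qTilde (fun _ => G) T ω π' ≤ S := by
    intro π'
    rw [hqTilde π', hSdef]
    have h2 := mul_le_mul_of_nonneg_left (hL_le π') hω.le
    have h1 := hA_le π'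
    linarith
  -- equality characterisation for qTilde
  have hq_iff : ∀ π' : V → ℕ → ℕ, qTilde (fun _ => G) T ω π' = S ↔
      ((∀ v : V, ∀ t ∈ Icc 1 T, π' v t = π' v 1) ∧
        staticQ G (fun v => π' v 1) = Q) := by
    intro π'
    constructor
    · intro heq
      rw [hqTilde π', hSdef] at heq
      have h1 := hA_le π'
      have h2 := hL_le π'
      have h2' := mul_le_mul_of_nonneg_left h2 hω.le
      have hA_eq : (∑ t ∈ Icc 1 T, snapTerm G fun v => π' v t)
          = (T : ℝ) * (2 * m * Q) := by linarith
      have hL_eq : (∑ v : V, ∑ t ∈ Icc 1 (T - 1),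
          if π' v t = π' v (t + 1) then (1 : ℝ) else 0) = n * ((T : ℝ) - 1) := by
        have : ω * (∑ v : V, ∑ t ∈ Icc 1 (T - 1),
            if π' v t = π' v (t + 1) then (1 : ℝ) else 0)
            = ω * (n * ((T : ℝ) - 1)) := by linarith
        exact mul_left_cancel₀ hω.ne' this
      -- extract snapshot equality at t = 1
      have hsnap_all : ∀ t ∈ Icc 1 T, (snapTerm G fun v => π' v t) = 2 * m * Q := by
        have hconst : (∑ _t ∈ Icc 1 T, (2 * m * Q)) = (T : ℝ) * (2 * m * Q) := by
          rw [Finset.sum_const, Nat.card_Icc, nsmul_eq_mul]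
          simp only [Nat.add_sub_cancel]
        exact (Finset.sum_eq_sum_iff_of_le fun t _ => hsnap_le _).mp
          (by rw [hA_eq, hconst])
      have hone : (1 : ℕ) ∈ Icc 1 T := mem_Icc.mpr ⟨le_refl 1, hT⟩
      have hstat : staticQ G (fun v => π' v 1) = Q := by
        have h3 := hsnap_all 1 hone
        rw [snapTerm_eq_mul G hm.ne'] at h3
        have h2m : (2 * m : ℝ) ≠ 0 := by positivity
        exact mul_left_cancel₀ h2m h3
      -- extract full loyalty
      have hloyal : ∀ v, ∀ t ∈ Icc 1 (T - 1), π' v t = π' v (t + 1) := by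
        have hout : ∀ v ∈ (univ : Finset V),
            (∑ t ∈ Icc 1 (T - 1), if π' v t = π' v (t + 1) then (1 : ℝ) else 0)
              = (T : ℝ) - 1 := by
          apply (Finset.sum_eq_sum_iff_of_le fun v _ => hinner_le π' v).mp
          rw [hL_eq, Finset.sum_const, nsmul_eq_mul, Finset.card_univ]
        intro v t ht
        have hin : ∀ t ∈ Icc 1 (T - 1),
            (if π' v t = π' v (t + 1) then (1 : ℝ) else 0) = 1 := by
          apply (Finset.sum_eq_sum_iff_of_le
            fun t _ => by split_ifs <;> norm_num).mp
          rw [hout v (mem_univ v), Finset.sum_const, nsmul_eq_mul, mul_one, hcardIcc]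
        have := hin t ht
        by_contra hc
        simp [hc] at this
      exact ⟨(hloyal_iff π').mp hloyal, hstat⟩
    · rintro ⟨hl, hs⟩
      rw [hqTilde π', hSdef]
      have hAeq : (∑ t ∈ Icc 1 T, snapTerm G fun v => π' v t)
          = (T : ℝ) * (2 * m * Q) := by
        have : ∀ t ∈ Icc 1 T, (snapTerm G fun v => π' v t) = 2 * m * Q := by
          intro t ht
          have hf : (fun v => π' v t) = fun v => π' v 1 := funext fun v => hl v t ht
          rw [hf, snapTerm_eq_mul G hm.ne', hs]
        rw [Finset.sum_congr rfl this, Finset.sum_const, Nat.card_Icc, nsmul_eq_mul]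
        simp only [Nat.add_sub_cancel]
      have hLeq : (∑ v : V, ∑ t ∈ Icc 1 (T - 1),
          if π' v t = π' v (t + 1) then (1 : ℝ) else 0) = n * ((T : ℝ) - 1) := by
        have hl' := (hloyal_iff π').mpr hl
        have : ∀ v ∈ (univ : Finset V),
            (∑ t ∈ Icc 1 (T - 1), if π' v t = π' v (t + 1) then (1 : ℝ) else 0)
              = (T : ℝ) - 1 := by
          intro v _
          have : ∀ t ∈ Icc 1 (T - 1),
              (if π' v t = π' v (t + 1) then (1 : ℝ) else 0) = 1 := by
            intro t ht
            rw [if_pos (hl' v t ht)]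
          rw [Finset.sum_congr rfl this, Finset.sum_const, nsmul_eq_mul, mul_one,
            hcardIcc]
        rw [Finset.sum_congr rfl this, Finset.sum_const, nsmul_eq_mul,
          Finset.card_univ]
      rw [hAeq, hLeq]
  -- an optimal temporal partition exists: repeat an optimal static partition
  obtain ⟨σ₀, hσ₀⟩ : ∃ σ : V → V, staticQ G σ = staticQStar G :=
    exists_eq_ciSup_of_finite
  set ι : V → ℕ := fun v => ((Fintype.equivFin V) v : ℕ) with hι
  have hιinj : Function.Injective ι := fun a b h => by
    apply (Fintype.equivFin V).injective
    exact Fin.val_injective h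
  set π₀ : V → ℕ → ℕ := fun v _ => ι (σ₀ v) with hπ₀
  have hπ₀stat : staticQ G (fun v => π₀ v 1) = Q := by
    have := staticQ_comp G σ₀ ι fun v w h => by
      have := hιinj h
      exact this
    rw [hπ₀]
    simpa [hσ₀] using this
  have hπ₀eq : qTilde (fun _ => G) T ω π₀ = S :=
    (hq_iff π₀).mpr ⟨fun v t _ => rfl, hπ₀stat⟩
  -- the supremum value
  have hstar : qTempStar (fun _ => G) T ω = S / (2 * mu (fun _ => G) T ω) := by
    apply le_antisymm
    · apply ciSup_le
      intro π'
      unfold qTemp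
      gcongr
      · exact hqle π'
    · have hbdd : BddAbove (Set.range fun π' : V → ℕ → ℕ =>
          qTemp (fun _ => G) T ω π') := by
        refine ⟨S / (2 * mu (fun _ => G) T ω), ?_⟩
        rintro x ⟨π', rfl⟩
        show qTilde (fun _ => G) T ω π' / (2 * mu (fun _ => G) T ω)
          ≤ S / (2 * mu (fun _ => G) T ω)
        gcongr
        · exact hqle π'
      have h1 := le_ciSup hbdd π₀
      have h2 : qTemp (fun _ => G) T ω π₀ = S / (2 * mu (fun _ => G) T ω) := by
        unfold qTemp
        rw [hπ₀eq]
      rw [h2] at h1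
      exact h1
  rw [hstar]
  unfold qTemp
  constructor
  · intro h
    have hS : qTilde (fun _ => G) T ω π = S := by
      rw [div_eq_div_iff hμpos.ne' hμpos.ne'] at h
      exact mul_right_cancel₀ hμpos.ne' h
    exact (hq_iff π).mp hS
  · intro h
    rw [(hq_iff π).mpr h]

end TemporalModularity
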